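/- arXiv:2206.07691 — 2 statements merged into one kernel-verified Lean document; each statement's English description precedes it below -/
import Mathlib

section
/- Let p ≥ 3 be an integer and set σ₁ = (1 − cos(2π/p))/sin(2π/p). Then {r ∈ S³ : ⟨u_1, r⟩ = 0 and ⟨u_j, r⟩ > 0 for all j ∈ {2,…,p−1}} = {r ∈ S³ : r₁ = σ₁·r₀ and r₀ > 0}, and {r ∈ S³ : ⟨u_{p−1}, r⟩ = 0 and ⟨u_j, r⟩ > 0 for all j ∈ {1,…,p−2}} = {r ∈ S³ : r₁ = −σ₁·r₀ and r₀ > 0}. -/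
open scoped RealInnerProductSpace

/-- The vector `u_k = (1 - cos(2πk/p), -sin(2πk/p), 0, 0) ∈ ℝ⁴`. -/
noncomputable def uvec (p k : ℕ) : EuclideanSpace ℝ (Fin 4) :=
  WithLp.toLp 2 ![1 - Real.cos (2 * Real.pi * (k : ℝ) / (p : ℝ)),
    -Real.sin (2 * Real.pi * (k : ℝ) / (p : ℝ)), 0, 0]

lemma uvec_inner (p k : ℕ) (r : EuclideanSpace ℝ (Fin 4)) :
    ⟪uvec p k, r⟫ = 2 * Real.sin (Real.pi * k / p) *
      (Real.sin (Real.pi * k / p) * r 0 - Real.cos (Real.pi * k / p) * r 1) := by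
  have h1 : 2 * Real.pi * (k : ℝ) / p = 2 * (Real.pi * k / p) := by ring
  have h2 := Real.sin_sq_add_cos_sq (Real.pi * k / p)
  simp only [uvec, PiLp.toLp_apply, WithLp.ofLp_toLp, PiLp.inner_apply, RCLike.inner_apply, conj_trivial, Fin.sum_univ_four,
    Matrix.cons_val_zero, Matrix.cons_val_one, Matrix.head_cons, Matrix.cons_val_two,
    Matrix.tail_cons, Matrix.cons_val_three, h1, Real.sin_two_mul, Real.cos_two_mul']
  linear_combination (-(r 0)) * h2

lemma sinpos (p k : ℕ) (hp : 3 ≤ p) (hk1 : 1 ≤ k) (hk2 : k ≤ p - 1) :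
    0 < Real.sin (Real.pi * k / p) := by
  have hp0 : (0:ℝ) < p := by exact_mod_cast (by omega : 0 < p)
  have hk0 : (0:ℝ) < k := by exact_mod_cast hk1
  have hkp : (k:ℝ) < p := by exact_mod_cast (by omega : k < p)
  apply Real.sin_pos_of_pos_of_lt_pi
  · positivity
  · rw [div_lt_iff₀ hp0]
    nlinarith [Real.pi_pos]

/-- For `p ≥ 3` and `σ₁ = (1 - cos(2π/p))/sin(2π/p)`, the stratum
`D^{(1)}_1` equals `{r ∈ S³ | r₁ = σ₁ r₀, r₀ > 0}` and the stratum `D^{(1)}_{p-1}` equals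
`{r ∈ S³ | r₁ = -σ₁ r₀, r₀ > 0}`. -/
theorem stmt4 (p : ℕ) (hp : 3 ≤ p) (σ₁ : ℝ)
    (hσ : σ₁ = (1 - Real.cos (2 * Real.pi / (p : ℝ))) / Real.sin (2 * Real.pi / (p : ℝ))) :
    ({r : EuclideanSpace ℝ (Fin 4) | ‖r‖ = 1 ∧ ⟪uvec p 1, r⟫ = 0 ∧
        ∀ j : ℕ, 2 ≤ j → j ≤ p - 1 → 0 < ⟪uvec p j, r⟫} =
      {r : EuclideanSpace ℝ (Fin 4) | ‖r‖ = 1 ∧ r 1 = σ₁ * r 0 ∧ 0 < r 0}) ∧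
    ({r : EuclideanSpace ℝ (Fin 4) | ‖r‖ = 1 ∧ ⟪uvec p (p - 1), r⟫ = 0 ∧
        ∀ j : ℕ, 1 ≤ j → j ≤ p - 2 → 0 < ⟪uvec p j, r⟫} =
      {r : EuclideanSpace ℝ (Fin 4) | ‖r‖ = 1 ∧ r 1 = -σ₁ * r 0 ∧ 0 < r 0}) := by
  have hp0 : (0:ℝ) < p := by exact_mod_cast (by omega : 0 < p)
  set s := Real.sin (Real.pi / p) with hs_def
  set c := Real.cos (Real.pi / p) with hc_def
  have hpy : s ^ 2 + c ^ 2 = 1 := Real.sin_sq_add_cos_sq _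
  have hs : 0 < s := by
    have := sinpos p 1 hp le_rfl (by omega)
    simpa [hs_def] using this
  have hc : 0 < c := by
    apply Real.cos_pos_of_mem_Ioo
    constructor
    · have : (0:ℝ) < Real.pi / p := by positivity
      linarith [Real.pi_pos]
    · have h3 : (3:ℝ) ≤ p := by exact_mod_cast hp
      rw [div_lt_div_iff₀ hp0 (by norm_num : (0:ℝ) < 2)]
      nlinarith [Real.pi_pos]
  have hσ' : σ₁ * c = s := by
    rw [hσ, show 2 * Real.pi / (p:ℝ) = 2 * (Real.pi / p) by ring, Real.sin_two_mul,
      Real.cos_two_mul', ← hs_def, ← hc_def]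
    field_simp
    linear_combination (-1) * hpy
  have key1 : ∀ r : EuclideanSpace ℝ (Fin 4),
      ⟪uvec p 1, r⟫ = 2 * s * (s * r 0 - c * r 1) := by
    intro r
    rw [uvec_inner, hs_def, hc_def]
    norm_num
  have keyp : ∀ r : EuclideanSpace ℝ (Fin 4),
      ⟪uvec p (p - 1), r⟫ = 2 * s * (s * r 0 + c * r 1) := by
    intro r
    rw [uvec_inner]
    have e : Real.pi * ((p - 1 : ℕ) : ℝ) / p = Real.pi - Real.pi / p := by
      rw [Nat.cast_sub (by omega : 1 ≤ p)]
      field_simp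
      ring
    rw [e, Real.sin_pi_sub, Real.cos_pi_sub, hs_def, hc_def]
    ring
  constructor
  · ext r
    simp only [Set.mem_setOf_eq]
    constructor
    · rintro ⟨hn, h0, hpos⟩
      rw [key1] at h0
      have h0' : s * r 0 - c * r 1 = 0 := by
        rcases mul_eq_zero.mp h0 with h | h
        · exact absurd h (by positivity)
        · exact h
      have hr1 : r 1 = σ₁ * r 0 := by
        have hcne : c ≠ 0 := ne_of_gt hc
        apply mul_left_cancel₀ hcne
        linear_combination (-1) * h0' - r 0 * hσ'
      refine ⟨hn, hr1, ?_⟩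
      have h2 := hpos 2 le_rfl (by omega)
      rw [uvec_inner, show Real.pi * ((2:ℕ):ℝ) / p = 2 * (Real.pi / p) by push_cast; ring,
        Real.sin_two_mul, Real.cos_two_mul', ← hs_def, ← hc_def] at h2
      have hid : (2 * (2 * s * c) * (2 * s * c * r 0 - (c ^ 2 - s ^ 2) * r 1)) * c
          = 4 * s ^ 2 * c * r 0 := by
        linear_combination (4 * s * c * (c ^ 2 - s ^ 2)) * h0' + (4 * s ^ 2 * c * r 0) * hpy
      have hX : 0 < 4 * s ^ 2 * c * r 0 := hid ▸ mul_pos h2 hc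
      nlinarith [hX, mul_pos (mul_pos hs hs) hc]
    · rintro ⟨hn, hr1, hr0⟩
      refine ⟨hn, ?_, ?_⟩
      · rw [key1, hr1]
        linear_combination (-(2 * s * r 0)) * hσ'
      · intro j hj1 hj2
        rw [uvec_inner]
        have hsj : 0 < Real.sin (Real.pi * j / p) := sinpos p j hp (by omega) hj2
        have e : Real.pi * ((j - 1 : ℕ) : ℝ) / p = Real.pi * j / p - Real.pi / p := by
          rw [Nat.cast_sub (by omega : 1 ≤ j)]
          field_simp
          ring
        have hsj1 : 0 < Real.sin (Real.pi * j / p - Real.pi / p) := by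
          rw [← e]; exact sinpos p (j - 1) hp (by omega) (by omega)
        rw [Real.sin_sub, ← hs_def, ← hc_def] at hsj1
        rw [hr1]
        have expand : Real.sin (Real.pi * j / p) * r 0 - Real.cos (Real.pi * j / p) * (σ₁ * r 0) =
            (r 0 / c) * (Real.sin (Real.pi * j / p) * c - Real.cos (Real.pi * j / p) * s) := by
          field_simp
          linear_combination (-(Real.cos (Real.pi * j / p))) * hσ'
        rw [expand]
        exact mul_pos (by positivity) (mul_pos (div_pos hr0 hc) hsj1)
  · ext r
    simp only [Set.mem_setOf_eq]
    constructor
    · rintro ⟨hn, h0, hpos⟩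
      rw [keyp] at h0
      have h0' : s * r 0 + c * r 1 = 0 := by
        rcases mul_eq_zero.mp h0 with h | h
        · exact absurd h (by positivity)
        · exact h
      have hr1 : r 1 = -σ₁ * r 0 := by
        have hcne : c ≠ 0 := ne_of_gt hc
        apply mul_left_cancel₀ hcne
        linear_combination h0' + r 0 * hσ'
      refine ⟨hn, hr1, ?_⟩
      have h1 := hpos 1 le_rfl (by omega)
      rw [key1] at h1
      have hid : 2 * s * (s * r 0 - c * r 1) = 4 * s ^ 2 * r 0 - 2 * s * (s * r 0 + c * r 1) := by
        ring
      rw [hid, h0', mul_zero, sub_zero] at h1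
      nlinarith [h1, mul_pos hs hs]
    · rintro ⟨hn, hr1, hr0⟩
      refine ⟨hn, ?_, ?_⟩
      · rw [keyp, hr1]
        linear_combination (-(2 * s * r 0)) * hσ'
      · intro j hj1 hj2
        rw [uvec_inner]
        have hsj : 0 < Real.sin (Real.pi * j / p) := sinpos p j hp hj1 (by omega)
        have e : Real.pi * ((j + 1 : ℕ) : ℝ) / p = Real.pi * j / p + Real.pi / p := by
          push_cast
          field_simp
        have hsj1 : 0 < Real.sin (Real.pi * j / p + Real.pi / p) := by
          rw [← e]; exact sinpos p (j + 1) hp (by omega) (by omega)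
        rw [Real.sin_add, ← hs_def, ← hc_def] at hsj1
        rw [hr1]
        have expand : Real.sin (Real.pi * j / p) * r 0 - Real.cos (Real.pi * j / p) * (-σ₁ * r 0) =
            (r 0 / c) * (Real.sin (Real.pi * j / p) * c + Real.cos (Real.pi * j / p) * s) := by
          field_simp
          linear_combination (Real.cos (Real.pi * j / p)) * hσ'
        rw [expand]
        exact mul_pos (by positivity) (mul_pos (div_pos hr0 hc) hsj1)
end

section
/- Let p ≥ 3 be an integer, σ₁ = (1 − cos(2π/p))/sin(2π/p), and Δ = {r ∈ S³ : ⟨u_k, r⟩ > 0 for all k ∈ {1,…,p−1}}. Then the frontier of Δ in S³ is the union of the three sets A = {r ∈ S³ : r₁ = σ₁·r₀, r₀ > 0}, B = {r ∈ S³ : r₁ = −σ₁·r₀, r₀ > 0}, and C = {r ∈ S³ : r₀ = 0 and r₁ = 0}, and these three sets are pairwise disjoint. -/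
open scoped RealInnerProductSpace

/-- The unit sphere `S³ ⊆ ℝ⁴` as a topological space. -/
abbrev Sph3 : Type := Metric.sphere (0 : EuclideanSpace ℝ (Fin 4)) 1

/-- The normal fundamental domain `Δ = {r ∈ S³ | ⟪u_k, r⟫ > 0 for k = 1, …, p-1}`,
as a subset of the sphere `S³` with its subspace topology. -/
noncomputable def Delta (p : ℕ) : Set Sph3 :=
  {r | ∀ k : ℕ, 1 ≤ k → k ≤ p - 1 → 0 < ⟪uvec p k, (r : EuclideanSpace ℝ (Fin 4))⟫}

section Aux
open Real

lemma inner_uvec (p k : ℕ) (x : EuclideanSpace ℝ (Fin 4)) :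
    ⟪uvec p k, x⟫ = (1 - Real.cos (2 * Real.pi * (k : ℝ) / (p : ℝ))) * x 0
      - Real.sin (2 * Real.pi * (k : ℝ) / (p : ℝ)) * x 1 := by
  simp [uvec, PiLp.inner_apply, Fin.sum_univ_four, RCLike.inner_apply]
  ring

section
variable {p : ℕ} (hp : 3 ≤ p)
include hp

lemma pr3 : (3:ℝ) ≤ (p:ℝ) := by exact_mod_cast hp
lemma alpha_pos : 0 < π / p := by
  have := pr3 hp; positivity
lemma alpha_lt : π / p < π / 2 := by
  have h3 := pr3 hp
  have : (2:ℝ) < p := by linarith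
  exact div_lt_div_of_pos_left Real.pi_pos (by linarith) this
lemma cos_alpha_pos : 0 < Real.cos (π / p) :=
  Real.cos_pos_of_mem_Ioo ⟨by linarith [alpha_pos hp, Real.pi_pos], alpha_lt hp⟩
lemma sin_alpha_pos : 0 < Real.sin (π / p) :=
  Real.sin_pos_of_pos_of_lt_pi (alpha_pos hp) (by linarith [alpha_lt hp, Real.pi_pos])

lemma sigma_eq : (1 - Real.cos (2 * π / p)) / Real.sin (2 * π / p) = Real.tan (π / p) := by
  have hs := sin_alpha_pos hp
  have hc := cos_alpha_pos hp
  have h2 : 2 * π / (p:ℝ) = 2 * (π / p) := by ring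
  rw [h2, Real.sin_two_mul, Real.cos_two_mul, Real.tan_eq_sin_div_cos]
  have hpy := Real.sin_sq_add_cos_sq (π / p)
  field_simp
  nlinarith [hpy]

-- key inequality
lemma key_ineq {k : ℕ} (hk1 : 1 ≤ k) (hk2 : k ≤ p - 1) :
    Real.tan (π / p) * |Real.sin (2 * π * k / p)| ≤ 1 - Real.cos (2 * π * k / p) := by
  have hs := sin_alpha_pos hp
  have hc := cos_alpha_pos hp
  set a := π / (p:ℝ) with ha
  set b := π * k / (p:ℝ) with hb
  have hppos : (0:ℝ) < p := by linarith [pr3 hp]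
  have hk1' : (1:ℝ) ≤ (k:ℝ) := by exact_mod_cast hk1
  have hk2' : (k:ℝ) ≤ (p:ℝ) - 1 := by
    have : k ≤ p - 1 := hk2
    have : (k:ℝ) ≤ ((p-1 : ℕ) : ℝ) := by exact_mod_cast this
    rwa [Nat.cast_sub (by omega), Nat.cast_one] at this
  have hb0 : 0 < b := by rw [hb]; positivity
  have hbpi : b < π := by
    rw [hb]
    rw [div_lt_iff₀ hppos]
    nlinarith [Real.pi_pos]
  have hsinb : 0 < Real.sin b := Real.sin_pos_of_pos_of_lt_pi hb0 hbpi
  -- core: sin a * |cos b| ≤ cos a * sin b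
  have core : Real.sin a * |Real.cos b| ≤ Real.cos a * Real.sin b := by
    rcases le_or_gt 0 (Real.cos b) with h | h
    · rw [abs_of_nonneg h]
      have hsub : 0 ≤ Real.sin (b - a) := by
        apply Real.sin_nonneg_of_nonneg_of_le_pi
        · rw [hb, ha]
          rw [sub_nonneg, div_le_div_iff₀ hppos hppos]
          nlinarith [mul_nonneg (mul_pos Real.pi_pos hppos).le (sub_nonneg.2 hk1')]
        · have : b - a ≤ b := by linarith [alpha_pos hp]
          linarith
      rw [Real.sin_sub] at hsub
      linarith
    · rw [abs_of_neg h]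
      have hadd : 0 ≤ Real.sin (b + a) := by
        apply Real.sin_nonneg_of_nonneg_of_le_pi
        · linarith [alpha_pos hp]
        · rw [hb, ha, ← add_div, div_le_iff₀ hppos]
          nlinarith [Real.pi_pos]
      rw [Real.sin_add] at hadd
      nlinarith
  have h2b : 2 * π * (k:ℝ) / p = 2 * b := by rw [hb]; ring
  rw [h2b, Real.sin_two_mul, Real.cos_two_mul, Real.tan_eq_sin_div_cos]
  have hpy := Real.sin_sq_add_cos_sq b
  have habs : |2 * Real.sin b * Real.cos b| = 2 * Real.sin b * |Real.cos b| := by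
    rw [abs_mul, abs_of_nonneg (by positivity : (0:ℝ) ≤ 2 * Real.sin b)]
  rw [habs]
  rw [div_mul_eq_mul_div, div_le_iff₀ hc]
  nlinarith [core, hsinb.le, abs_nonneg (Real.cos b)]

end

section
variable {p : ℕ} (hp : 3 ≤ p)
include hp

set_option maxHeartbeats 1600000 in
lemma delta_char (r : Sph3) :
    r ∈ Delta p ↔ 0 < (r : EuclideanSpace ℝ (Fin 4)) 0 ∧
      |(r : EuclideanSpace ℝ (Fin 4)) 1| < Real.tan (π / p) * (r : EuclideanSpace ℝ (Fin 4)) 0 := by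
  have hs := sin_alpha_pos hp
  have hc := cos_alpha_pos hp
  obtain ⟨x0, hx0d⟩ : ∃ y, (r : EuclideanSpace ℝ (Fin 4)) 0 = y := ⟨_, rfl⟩
  obtain ⟨x1, hx1d⟩ : ∃ y, (r : EuclideanSpace ℝ (Fin 4)) 1 = y := ⟨_, rfl⟩
  rw [hx0d, hx1d]
  have hppos : (0:ℝ) < p := by linarith [pr3 hp]
  constructor
  · intro hr
    have h1 := hr 1 le_rfl (by omega)
    have h2 := hr (p-1) (by omega) le_rfl
    rw [inner_uvec, hx0d, hx1d] at h1 h2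
    clear hr hx0d hx1d r
    have hca1 : 2 * Real.pi * ((1:ℕ):ℝ) / (p:ℝ) = 2 * (π / p) := by push_cast; ring
    rw [hca1] at h1
    have hcast : ((p - 1 : ℕ) : ℝ) = (p:ℝ) - 1 := by
      rw [Nat.cast_sub (by omega), Nat.cast_one]
    have hca2 : 2 * Real.pi * ((p-1 : ℕ):ℝ) / (p:ℝ) = 2 * π - 2 * (π / p) := by
      rw [hcast]; field_simp
    rw [hca2, Real.cos_sub, Real.sin_sub, Real.cos_two_pi, Real.sin_two_pi] at h2
    rw [Real.sin_two_mul, Real.cos_two_mul] at h1 h2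
    have hpy := Real.sin_sq_add_cos_sq (π / p)
    have hx : x0 * (Real.sin (π/p)^2 + Real.cos (π/p)^2) = x0 := by rw [hpy, mul_one]
    have h1' : 0 < 2 * Real.sin (π/p) * (Real.sin (π/p) * x0 - Real.cos (π/p) * x1) := by
      linarith [h1, hx]
    have h2' : 0 < 2 * Real.sin (π/p) * (Real.sin (π/p) * x0 + Real.cos (π/p) * x1) := by
      linarith [h2, hx]
    have e1 : Real.sin (π/p) * x0 - Real.cos (π/p) * x1 > 0 := by nlinarith [h1', hs]
    have e2 : Real.sin (π/p) * x0 + Real.cos (π/p) * x1 > 0 := by nlinarith [h2', hs]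
    have hx0 : 0 < x0 := by nlinarith
    refine ⟨hx0, ?_⟩
    have h3 : |x1| * Real.cos (π/p) < Real.sin (π/p) * x0 := by
      rcases abs_cases x1 with ⟨he, _⟩ | ⟨he, _⟩ <;> rw [he] <;> nlinarith
    rw [Real.tan_eq_sin_div_cos, div_mul_eq_mul_div, lt_div_iff₀ hc]
    exact h3
  · rintro ⟨hx0, hx1⟩ k hk1 hk2
    rw [inner_uvec, hx0d, hx1d]
    clear hx0d hx1d r
    obtain ⟨b, hb⟩ : ∃ y, π * (k:ℝ) / (p:ℝ) = y := ⟨_, rfl⟩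
    have h2b : 2 * Real.pi * (k:ℝ) / p = 2 * b := by rw [← hb]; ring
    have hk1' : (1:ℝ) ≤ (k:ℝ) := by exact_mod_cast hk1
    have hk2' : (k:ℝ) ≤ (p:ℝ) - 1 := by
      have : (k:ℝ) ≤ ((p-1 : ℕ) : ℝ) := by exact_mod_cast hk2
      rwa [Nat.cast_sub (by omega), Nat.cast_one] at this
    have hb0 : 0 < b := by rw [← hb]; positivity
    have hbpi : b < π := by
      rw [← hb, div_lt_iff₀ hppos]
      nlinarith [Real.pi_pos]
    have hsinb : 0 < Real.sin b := Real.sin_pos_of_pos_of_lt_pi hb0 hbpi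
    have hcos2 : 1 - Real.cos (2*b) = 2 * Real.sin b ^ 2 := by
      rw [Real.cos_two_mul]
      linear_combination (-2 : ℝ) * Real.sin_sq_add_cos_sq b
    have hkey := key_ineq hp hk1 hk2
    rw [h2b] at hkey ⊢
    rcases eq_or_ne (Real.sin (2*b)) 0 with h0 | h0
    · rw [h0, hcos2]
      nlinarith [mul_pos (mul_pos hsinb hsinb) hx0]
    · have habs : 0 < |Real.sin (2*b)| := abs_pos.2 h0
      have c1 : Real.sin (2*b) * x1 ≤ |Real.sin (2*b)| * |x1| := by
        calc Real.sin (2*b) * x1 ≤ |Real.sin (2*b) * x1| := le_abs_self _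
        _ = |Real.sin (2*b)| * |x1| := abs_mul _ _
      have c2 : |Real.sin (2*b)| * |x1| < |Real.sin (2*b)| * (Real.tan (π/p) * x0) :=
        mul_lt_mul_of_pos_left hx1 habs
      have c3 : |Real.sin (2*b)| * (Real.tan (π/p) * x0) ≤ (1 - Real.cos (2*b)) * x0 := by
        nlinarith [hkey, hx0.le]
      linarith
end

section topo
variable (t : ℝ)

lemma E_open : IsOpen {r : Sph3 | 0 < (r : EuclideanSpace ℝ (Fin 4)) 0 ∧
    |(r : EuclideanSpace ℝ (Fin 4)) 1| < t * (r : EuclideanSpace ℝ (Fin 4)) 0} := by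
  have h0 : Continuous (fun x : EuclideanSpace ℝ (Fin 4) => x 0) :=
    (EuclideanSpace.proj (0 : Fin 4)).continuous
  have h1 : Continuous (fun x : EuclideanSpace ℝ (Fin 4) => x 1) :=
    (EuclideanSpace.proj (1 : Fin 4)).continuous
  have : IsOpen {x : EuclideanSpace ℝ (Fin 4) | 0 < x 0 ∧ |x 1| < t * x 0} :=
    (isOpen_lt continuous_const h0).inter
      (isOpen_lt (continuous_abs.comp h1) (continuous_const.mul h0))
  exact this.preimage continuous_subtype_val

lemma F_closed : IsClosed {r : Sph3 | 0 ≤ (r : EuclideanSpace ℝ (Fin 4)) 0 ∧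
    |(r : EuclideanSpace ℝ (Fin 4)) 1| ≤ t * (r : EuclideanSpace ℝ (Fin 4)) 0} := by
  have h0 : Continuous (fun x : EuclideanSpace ℝ (Fin 4) => x 0) :=
    (EuclideanSpace.proj (0 : Fin 4)).continuous
  have h1 : Continuous (fun x : EuclideanSpace ℝ (Fin 4) => x 1) :=
    (EuclideanSpace.proj (1 : Fin 4)).continuous
  have : IsClosed {x : EuclideanSpace ℝ (Fin 4) | 0 ≤ x 0 ∧ |x 1| ≤ t * x 0} :=
    (isClosed_le continuous_const h0).inter
      (isClosed_le (continuous_abs.comp h1) (continuous_const.mul h0))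
  exact this.preimage continuous_subtype_val

lemma closure_E (ht : 0 < t) :
    closure {r : Sph3 | 0 < (r : EuclideanSpace ℝ (Fin 4)) 0 ∧
        |(r : EuclideanSpace ℝ (Fin 4)) 1| < t * (r : EuclideanSpace ℝ (Fin 4)) 0}
      = {r : Sph3 | 0 ≤ (r : EuclideanSpace ℝ (Fin 4)) 0 ∧
        |(r : EuclideanSpace ℝ (Fin 4)) 1| ≤ t * (r : EuclideanSpace ℝ (Fin 4)) 0} := by
  apply le_antisymm
  · exact closure_minimal (fun r hr => ⟨hr.1.le, hr.2.le⟩) (F_closed t)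
  · rintro r ⟨hr0, hr1⟩
    set q : EuclideanSpace ℝ (Fin 4) := EuclideanSpace.single (0 : Fin 4) (1:ℝ) with hq
    have hq0 : q 0 = 1 := by simp [hq, EuclideanSpace.single_apply]
    have hq1 : q 1 = 0 := by simp [hq, EuclideanSpace.single_apply]
    have hrnorm : ‖(r : EuclideanSpace ℝ (Fin 4))‖ = 1 :=
      mem_sphere_zero_iff_norm.1 r.2
    -- the sequence
    set u : ℕ → ℝ := fun n => ((n:ℝ) + 1)⁻¹ with hu
    have hu0 : ∀ n, 0 < u n := fun n => by positivity
    have hu1 : ∀ n, u n ≤ 1 := fun n => by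
      rw [hu]
      rw [inv_le_one_iff₀]
      right; push_cast; linarith
    set w : ℕ → EuclideanSpace ℝ (Fin 4) :=
      fun n => (1 - u n) • (r : EuclideanSpace ℝ (Fin 4)) + u n • q with hw
    have hw0 : ∀ n, w n 0 = (1 - u n) * (r : EuclideanSpace ℝ (Fin 4)) 0 + u n := by
      intro n
      simp [hw, hq0]
    have hw1 : ∀ n, w n 1 = (1 - u n) * (r : EuclideanSpace ℝ (Fin 4)) 1 := by
      intro n
      simp [hw, hq1]
    have hw0pos : ∀ n, 0 < w n 0 := by
      intro n
      rw [hw0 n]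
      have := hu0 n; have := hu1 n
      nlinarith [hr0]
    have hwne : ∀ n, w n ≠ 0 := by
      intro n h
      have := hw0pos n
      rw [h] at this
      simp at this
    have hwnorm : ∀ n, 0 < ‖w n‖ := fun n => norm_pos_iff.2 (hwne n)
    have hmemS : ∀ n, ‖w n‖⁻¹ • w n ∈ Metric.sphere (0 : EuclideanSpace ℝ (Fin 4)) 1 := by
      intro n
      rw [mem_sphere_zero_iff_norm, norm_smul, norm_inv, norm_norm,
        inv_mul_cancel₀ (hwnorm n).ne']
    set x : ℕ → Sph3 := fun n => ⟨‖w n‖⁻¹ • w n, hmemS n⟩ with hx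
    have hxmem : ∀ n, x n ∈ {r : Sph3 | 0 < (r : EuclideanSpace ℝ (Fin 4)) 0 ∧
        |(r : EuclideanSpace ℝ (Fin 4)) 1| < t * (r : EuclideanSpace ℝ (Fin 4)) 0} := by
      intro n
      have hinv : 0 < ‖w n‖⁻¹ := inv_pos.2 (hwnorm n)
      constructor
      · show 0 < (‖w n‖⁻¹ • w n) 0
        rw [PiLp.smul_apply, smul_eq_mul]
        exact mul_pos hinv (hw0pos n)
      · show |(‖w n‖⁻¹ • w n) 1| < t * (‖w n‖⁻¹ • w n) 0
        rw [PiLp.smul_apply, PiLp.smul_apply, smul_eq_mul, smul_eq_mul, abs_mul,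
          abs_of_pos hinv, hw0 n, hw1 n]
        rw [mul_comm t, mul_assoc]
        apply mul_lt_mul_of_pos_left _ hinv
        rw [abs_mul, abs_of_nonneg (by linarith [hu1 n] : (0:ℝ) ≤ 1 - u n)]
        have h1 : (1 - u n) * |(r : EuclideanSpace ℝ (Fin 4)) 1|
            ≤ (1 - u n) * (t * (r : EuclideanSpace ℝ (Fin 4)) 0) :=
          mul_le_mul_of_nonneg_left hr1 (by linarith [hu1 n])
        have h2 : 0 < u n * t := mul_pos (hu0 n) ht
        nlinarith [h1, h2]
    -- convergence
    have hut : Filter.Tendsto u Filter.atTop (nhds 0) := by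
      rw [hu]
      simpa using tendsto_one_div_add_atTop_nhds_zero_nat.congr (fun n => by rw [one_div])
    have hwt : Filter.Tendsto w Filter.atTop (nhds (r : EuclideanSpace ℝ (Fin 4))) := by
      have l1 : Filter.Tendsto (fun n => (1 - u n) • (r : EuclideanSpace ℝ (Fin 4)))
          Filter.atTop (nhds (((1:ℝ) - 0) • (r : EuclideanSpace ℝ (Fin 4)))) :=
        (Filter.Tendsto.const_sub 1 hut).smul_const _
      have l2 : Filter.Tendsto (fun n => u n • q) Filter.atTop (nhds ((0:ℝ) • q)) :=
        hut.smul_const _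
      have := l1.add l2
      simpa [hw] using this
    have hnt : Filter.Tendsto (fun n => ‖w n‖⁻¹) Filter.atTop (nhds 1) := by
      have := (hwt.norm).inv₀ (by rw [hrnorm]; norm_num)
      rwa [hrnorm, inv_one] at this
    have hvt : Filter.Tendsto (fun n => ‖w n‖⁻¹ • w n) Filter.atTop
        (nhds (r : EuclideanSpace ℝ (Fin 4))) := by
      have := hnt.smul hwt
      simpa using this
    have hxt : Filter.Tendsto x Filter.atTop (nhds r) := by
      rw [tendsto_subtype_rng]
      exact hvt
    exact mem_closure_of_tendsto hxt (Filter.Eventually.of_forall hxmem)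

end topo


end Aux

/-- For `p ≥ 3` and `σ₁ = (1 - cos(2π/p))/sin(2π/p)`, the frontier of `Δ`
in `S³` is the union of `A = {r₁ = σ₁ r₀, r₀ > 0}`, `B = {r₁ = -σ₁ r₀, r₀ > 0}` and
`C = {r₀ = r₁ = 0}`, and these three sets are pairwise disjoint. -/
theorem stmt6 (p : ℕ) (hp : 3 ≤ p) (σ₁ : ℝ)
    (hσ : σ₁ = (1 - Real.cos (2 * Real.pi / (p : ℝ))) / Real.sin (2 * Real.pi / (p : ℝ)))
    (A B C : Set Sph3)
    (hA : A = {r : Sph3 | (r : EuclideanSpace ℝ (Fin 4)) 1 = σ₁ * (r : EuclideanSpace ℝ (Fin 4)) 0 ∧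
      0 < (r : EuclideanSpace ℝ (Fin 4)) 0})
    (hB : B = {r : Sph3 | (r : EuclideanSpace ℝ (Fin 4)) 1 = -σ₁ * (r : EuclideanSpace ℝ (Fin 4)) 0 ∧
      0 < (r : EuclideanSpace ℝ (Fin 4)) 0})
    (hC : C = {r : Sph3 | (r : EuclideanSpace ℝ (Fin 4)) 0 = 0 ∧ (r : EuclideanSpace ℝ (Fin 4)) 1 = 0}) :
    frontier (Delta p) = A ∪ B ∪ C ∧ A ∩ B = ∅ ∧ A ∩ C = ∅ ∧ B ∩ C = ∅ := by
  have hσt : σ₁ = Real.tan (Real.pi / p) := by rw [hσ]; exact sigma_eq hp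
  have ht : 0 < Real.tan (Real.pi / p) :=
    Real.tan_pos_of_pos_of_lt_pi_div_two (alpha_pos hp) (alpha_lt hp)
  have hσpos : 0 < σ₁ := hσt ▸ ht
  have hA' : A = {r : Sph3 | (r : EuclideanSpace ℝ (Fin 4)) 1 = σ₁ * (r : EuclideanSpace ℝ (Fin 4)) 0 ∧
      0 < (r : EuclideanSpace ℝ (Fin 4)) 0} := by
    rw [← Set.preimage_image_eq A Subtype.val_injective, hA]
    exact Set.preimage_image_eq _ Subtype.val_injective
  have hB' : B = {r : Sph3 | (r : EuclideanSpace ℝ (Fin 4)) 1 = -σ₁ * (r : EuclideanSpace ℝ (Fin 4)) 0 ∧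
      0 < (r : EuclideanSpace ℝ (Fin 4)) 0} := by
    rw [← Set.preimage_image_eq B Subtype.val_injective, hB]
    exact Set.preimage_image_eq _ Subtype.val_injective
  have hC' : C = {r : Sph3 | (r : EuclideanSpace ℝ (Fin 4)) 0 = 0 ∧ (r : EuclideanSpace ℝ (Fin 4)) 1 = 0} := by
    rw [← Set.preimage_image_eq C Subtype.val_injective, hC]
    exact Set.preimage_image_eq _ Subtype.val_injective
  clear hA hB hC
  subst hA' hB' hC'
  refine ⟨?_, ?_, ?_, ?_⟩
  · have hD : Delta p = {r : Sph3 | 0 < (r : EuclideanSpace ℝ (Fin 4)) 0 ∧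
        |(r : EuclideanSpace ℝ (Fin 4)) 1| < σ₁ * (r : EuclideanSpace ℝ (Fin 4)) 0} := by
      ext r
      rw [hσt]
      exact delta_char hp r
    rw [hD, (E_open σ₁).frontier_eq, closure_E σ₁ hσpos]
    ext r
    obtain ⟨x0, hx0d⟩ : ∃ y, (r : EuclideanSpace ℝ (Fin 4)) 0 = y := ⟨_, rfl⟩
    obtain ⟨x1, hx1d⟩ : ∃ y, (r : EuclideanSpace ℝ (Fin 4)) 1 = y := ⟨_, rfl⟩
    simp only [Set.mem_diff, Set.mem_setOf_eq, Set.mem_union, hx0d, hx1d]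
    constructor
    · rintro ⟨⟨h0, h1⟩, hne⟩
      rcases eq_or_lt_of_le h0 with he | hlt
      · right
        have : |x1| ≤ 0 := by rw [← he] at h1; simpa using h1
        exact ⟨he.symm, abs_nonpos_iff.1 this⟩
      · have hge : σ₁ * x0 ≤ |x1| := by
          by_contra hcon
          push_neg at hcon
          exact hne ⟨hlt, hcon⟩
        have heq : |x1| = σ₁ * x0 := le_antisymm h1 hge
        rcases (abs_eq (by positivity : (0:ℝ) ≤ σ₁ * x0)).1 heq with he | he
        · exact Or.inl (Or.inl ⟨he, hlt⟩)
        · exact Or.inl (Or.inr ⟨by rw [he]; ring, hlt⟩)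
    · rintro ((⟨h1, h0⟩ | ⟨h1, h0⟩) | ⟨h0, h1⟩)
      · refine ⟨⟨h0.le, ?_⟩, ?_⟩
        · rw [h1, abs_of_nonneg (by positivity : (0:ℝ) ≤ σ₁ * x0)]
        · rintro ⟨-, hlt⟩
          rw [h1, abs_of_nonneg (by positivity : (0:ℝ) ≤ σ₁ * x0)] at hlt
          exact lt_irrefl _ hlt
      · have habs : |x1| = σ₁ * x0 := by
          rw [h1, neg_mul, abs_neg, abs_of_nonneg (by positivity : (0:ℝ) ≤ σ₁ * x0)]
        refine ⟨⟨h0.le, habs.le⟩, ?_⟩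
        rintro ⟨-, hlt⟩
        rw [habs] at hlt
        exact lt_irrefl _ hlt
      · refine ⟨⟨h0.ge, by rw [h0, h1]; simp⟩, ?_⟩
        rintro ⟨hlt, -⟩
        rw [h0] at hlt
        exact lt_irrefl _ hlt
  · rw [Set.eq_empty_iff_forall_notMem]
    rintro r ⟨⟨e1, p1⟩, ⟨e2, -⟩⟩
    rw [e1] at e2
    nlinarith
  · rw [Set.eq_empty_iff_forall_notMem]
    rintro r ⟨⟨-, p1⟩, ⟨e2, -⟩⟩
    rw [e2] at p1
    exact lt_irrefl _ p1
  · rw [Set.eq_empty_iff_forall_notMem]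
    rintro r ⟨⟨-, p1⟩, ⟨e2, -⟩⟩
    rw [e2] at p1
    exact lt_irrefl _ p1
end
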